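/- Let M be an n×n block matrix M = [[A, B], [C, D]] where A is an invertible k×k block and the Schur complement M/A = D - C A⁻¹ B is invertible. Then the reciprocal of the smallest singular value of M satisfies s_n(M)⁻¹ ≤ ‖A⁻¹‖ + ‖(M/A)⁻¹‖ (1 + ‖A⁻¹B‖)(1 + ‖CA⁻¹‖), where ‖·‖ denotes the operator norm. -/

import Mathlib

open Matrix

/-- Operator (spectral) norm of a real matrix, viewed as a linear map between
Euclidean spaces. -/
noncomputable def opNorm {m n : Type*} [Fintype m] [Fintype n] [DecidableEq n]
    (A : Matrix m n ℝ) : ℝ :=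
  ‖LinearMap.toContinuousLinearMap (Matrix.toEuclideanLin A)‖

open scoped Matrix.Norms.L2Operator

set_option linter.unusedSectionVars false


variable {m n p q : Type*} [Fintype m] [Fintype n] [Fintype p] [Fintype q]
  [DecidableEq m] [DecidableEq n] [DecidableEq p] [DecidableEq q]

lemma norm_one_le' : ‖(1 : Matrix n n ℝ)‖ ≤ 1 := by
  rw [Matrix.cstar_norm_def, _root_.map_one]
  exact ContinuousLinearMap.norm_id_le

lemma norm_le_one_of_mul_conjTranspose (E : Matrix m n ℝ)
    (h : E * Eᴴ = 1) : ‖E‖ ≤ 1 := by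
  have key := Matrix.l2_opNorm_conjTranspose_mul_self Eᴴ
  rw [conjTranspose_conjTranspose, h, Matrix.l2_opNorm_conjTranspose] at key
  nlinarith [norm_one_le' (n := m), norm_nonneg E]

lemma norm_fromCols_one_zero_le :
    ‖(fromCols (1 : Matrix m m ℝ) (0 : Matrix m p ℝ))‖ ≤ 1 := by
  refine norm_le_one_of_mul_conjTranspose _ ?_
  rw [conjTranspose_fromCols_eq_fromRows_conjTranspose, fromCols_mul_fromRows]
  simp

lemma norm_fromCols_zero_one_le :
    ‖(fromCols (0 : Matrix m p ℝ) (1 : Matrix m m ℝ))‖ ≤ 1 := by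
  refine norm_le_one_of_mul_conjTranspose _ ?_
  rw [conjTranspose_fromCols_eq_fromRows_conjTranspose, fromCols_mul_fromRows]
  simp

lemma norm_fromRows_one_zero_le :
    ‖(fromRows (1 : Matrix m m ℝ) (0 : Matrix p m ℝ))‖ ≤ 1 := by
  have h1 : (fromCols (1 : Matrix m m ℝ) (0 : Matrix m p ℝ))ᴴ =
      fromRows (1 : Matrix m m ℝ) (0 : Matrix p m ℝ) := by
    rw [conjTranspose_fromCols_eq_fromRows_conjTranspose]; simp
  rw [← h1, Matrix.l2_opNorm_conjTranspose]
  exact norm_fromCols_one_zero_le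

lemma norm_fromRows_zero_one_le :
    ‖(fromRows (0 : Matrix p m ℝ) (1 : Matrix m m ℝ))‖ ≤ 1 := by
  have h1 : (fromCols (0 : Matrix m p ℝ) (1 : Matrix m m ℝ))ᴴ =
      fromRows (0 : Matrix p m ℝ) (1 : Matrix m m ℝ) := by
    rw [conjTranspose_fromCols_eq_fromRows_conjTranspose]; simp
  rw [← h1, Matrix.l2_opNorm_conjTranspose]
  exact norm_fromCols_zero_one_le

lemma norm_fromCols_le (X : Matrix n p ℝ) (Y : Matrix n q ℝ) :
    ‖fromCols X Y‖ ≤ ‖X‖ + ‖Y‖ := by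
  have hsplit : fromCols X Y =
      fromCols X (0 : Matrix n q ℝ) + fromCols (0 : Matrix n p ℝ) Y := by
    ext i j; cases j <;> simp [fromCols]
  have h1 : ‖fromCols X (0 : Matrix n q ℝ)‖ ≤ ‖X‖ := by
    have hX : fromCols X (0 : Matrix n q ℝ) =
        X * fromCols (1 : Matrix p p ℝ) (0 : Matrix p q ℝ) := by
      rw [mul_fromCols]; simp
    rw [hX]
    calc ‖X * _‖ ≤ ‖X‖ * ‖fromCols (1 : Matrix p p ℝ) (0 : Matrix p q ℝ)‖ :=
          Matrix.l2_opNorm_mul _ _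
      _ ≤ ‖X‖ * 1 := by
          have := norm_fromCols_one_zero_le (m := p) (p := q)
          nlinarith [norm_nonneg X]
      _ = ‖X‖ := mul_one _
  have h2 : ‖fromCols (0 : Matrix n p ℝ) Y‖ ≤ ‖Y‖ := by
    have hY : fromCols (0 : Matrix n p ℝ) Y =
        Y * fromCols (0 : Matrix q p ℝ) (1 : Matrix q q ℝ) := by
      rw [mul_fromCols]; simp
    rw [hY]
    calc ‖Y * _‖ ≤ ‖Y‖ * ‖fromCols (0 : Matrix q p ℝ) (1 : Matrix q q ℝ)‖ :=
          Matrix.l2_opNorm_mul _ _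
      _ ≤ ‖Y‖ * 1 := by
          have := norm_fromCols_zero_one_le (m := q) (p := p)
          nlinarith [norm_nonneg Y]
      _ = ‖Y‖ := mul_one _
  calc ‖fromCols X Y‖ ≤ _ := by rw [hsplit]; exact norm_add_le _ _
    _ ≤ ‖X‖ + ‖Y‖ := add_le_add h1 h2

lemma norm_fromRows_le (X : Matrix p n ℝ) (Y : Matrix q n ℝ) :
    ‖fromRows X Y‖ ≤ ‖X‖ + ‖Y‖ := by
  have hsplit : fromRows X Y =
      fromRows X (0 : Matrix q n ℝ) + fromRows (0 : Matrix p n ℝ) Y := by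
    ext i j; cases i <;> simp [fromRows_apply_inl, fromRows_apply_inr]
  have h1 : ‖fromRows X (0 : Matrix q n ℝ)‖ ≤ ‖X‖ := by
    have hX : fromRows X (0 : Matrix q n ℝ) =
        fromRows (1 : Matrix p p ℝ) (0 : Matrix q p ℝ) * X := by
      rw [fromRows_mul]; simp
    rw [hX]
    calc ‖_ * X‖ ≤ ‖fromRows (1 : Matrix p p ℝ) (0 : Matrix q p ℝ)‖ * ‖X‖ :=
          Matrix.l2_opNorm_mul _ _
      _ ≤ 1 * ‖X‖ := by
          have := norm_fromRows_one_zero_le (m := p) (p := q)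
          nlinarith [norm_nonneg X]
      _ = ‖X‖ := one_mul _
  have h2 : ‖fromRows (0 : Matrix p n ℝ) Y‖ ≤ ‖Y‖ := by
    have hY : fromRows (0 : Matrix p n ℝ) Y =
        fromRows (0 : Matrix p q ℝ) (1 : Matrix q q ℝ) * Y := by
      rw [fromRows_mul]; simp
    rw [hY]
    calc ‖_ * Y‖ ≤ ‖fromRows (0 : Matrix p q ℝ) (1 : Matrix q q ℝ)‖ * ‖Y‖ :=
          Matrix.l2_opNorm_mul _ _
      _ ≤ 1 * ‖Y‖ := by
          have := norm_fromRows_zero_one_le (m := q) (p := p)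
          nlinarith [norm_nonneg Y]
      _ = ‖Y‖ := one_mul _
  calc ‖fromRows X Y‖ ≤ _ := by rw [hsplit]; exact norm_add_le _ _
    _ ≤ ‖X‖ + ‖Y‖ := add_le_add h1 h2

lemma norm_fromBlocks_le (P : Matrix m p ℝ) (Q : Matrix m q ℝ)
    (R : Matrix n p ℝ) (S : Matrix n q ℝ) :
    ‖fromBlocks P Q R S‖ ≤ ‖P‖ + ‖Q‖ + ‖R‖ + ‖S‖ := by
  rw [← fromRows_fromCols_eq_fromBlocks]
  calc ‖fromRows (fromCols P Q) (fromCols R S)‖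
      ≤ ‖fromCols P Q‖ + ‖fromCols R S‖ := norm_fromRows_le _ _
    _ ≤ (‖P‖ + ‖Q‖) + (‖R‖ + ‖S‖) :=
        add_le_add (norm_fromCols_le _ _) (norm_fromCols_le _ _)
    _ = ‖P‖ + ‖Q‖ + ‖R‖ + ‖S‖ := by ring


lemma opNorm_eq_norm {m n : Type*} [Fintype m] [Fintype n] [DecidableEq n]
    (A : Matrix m n ℝ) : opNorm A = ‖A‖ := rfl

/-- Block-inverse bound: for `M = [[A,B],[C,D]]` with `A` and the Schur complement
`M/A = D - C A⁻¹ B` invertible, `s_n(M)⁻¹ = ‖M⁻¹‖` satisfies the stated bound. -/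
theorem stmt0 {k l : ℕ} (A : Matrix (Fin k) (Fin k) ℝ) (B : Matrix (Fin k) (Fin l) ℝ)
    (C : Matrix (Fin l) (Fin k) ℝ) (D : Matrix (Fin l) (Fin l) ℝ)
    (hA : IsUnit A) (hS : IsUnit (D - C * A⁻¹ * B)) :
    opNorm (Matrix.fromBlocks A B C D)⁻¹ ≤
      opNorm A⁻¹ +
        opNorm (D - C * A⁻¹ * B)⁻¹ * (1 + opNorm (A⁻¹ * B)) * (1 + opNorm (C * A⁻¹)) := by
  letI iA : Invertible A := hA.invertible
  have hAinv : ⅟A = A⁻¹ := invOf_eq_nonsing_inv A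
  letI iS : Invertible (D - C * ⅟A * B) :=
    hS.invertible.copy (D - C * ⅟A * B) (by rw [hAinv])
  letI iM : Invertible (fromBlocks A B C D) := fromBlocks₁₁Invertible A B C D
  have hMinv : (fromBlocks A B C D)⁻¹ =
      fromBlocks (A⁻¹ + A⁻¹ * B * (D - C * A⁻¹ * B)⁻¹ * C * A⁻¹)
        (-(A⁻¹ * B * (D - C * A⁻¹ * B)⁻¹))
        (-((D - C * A⁻¹ * B)⁻¹ * C * A⁻¹)) ((D - C * A⁻¹ * B)⁻¹) := by
    rw [← invOf_eq_nonsing_inv, invOf_fromBlocks₁₁_eq A B C D,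
      invOf_eq_nonsing_inv (D - C * ⅟A * B), hAinv]
  simp only [opNorm_eq_norm, hMinv]
  set S := (D - C * A⁻¹ * B)⁻¹ with hSdef
  have hblocks := norm_fromBlocks_le (A⁻¹ + A⁻¹ * B * S * C * A⁻¹)
    (-(A⁻¹ * B * S)) (-(S * C * A⁻¹)) S
  have hP : ‖A⁻¹ + A⁻¹ * B * S * C * A⁻¹‖ ≤ ‖A⁻¹‖ + ‖A⁻¹ * B‖ * ‖S‖ * ‖C * A⁻¹‖ := by
    refine (norm_add_le _ _).trans (add_le_add_right ?_ _)
    have e : A⁻¹ * B * S * C * A⁻¹ = (A⁻¹ * B * S) * (C * A⁻¹) := by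
      exact Matrix.mul_assoc (A⁻¹ * B * S) C A⁻¹
    rw [e]
    calc ‖(A⁻¹ * B * S) * (C * A⁻¹)‖ ≤ ‖A⁻¹ * B * S‖ * ‖C * A⁻¹‖ :=
          Matrix.l2_opNorm_mul _ _
      _ ≤ ‖A⁻¹ * B‖ * ‖S‖ * ‖C * A⁻¹‖ := by
          have := Matrix.l2_opNorm_mul (A⁻¹ * B) S
          nlinarith [norm_nonneg (C * A⁻¹), norm_nonneg (A⁻¹ * B * S)]
  have hQ : ‖-(A⁻¹ * B * S)‖ ≤ ‖A⁻¹ * B‖ * ‖S‖ := by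
    rw [norm_neg]; exact Matrix.l2_opNorm_mul _ _
  have hR : ‖-(S * C * A⁻¹)‖ ≤ ‖S‖ * ‖C * A⁻¹‖ := by
    rw [norm_neg, Matrix.mul_assoc]; exact Matrix.l2_opNorm_mul _ _
  nlinarith [hblocks, hP, hQ, hR, norm_nonneg S, norm_nonneg (A⁻¹ * B), norm_nonneg (C * A⁻¹)]
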